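/- Let z be an involution in S_n with exactly k fixed points. Then ℓ(ι_des(z)) = ℓ(ι_asc(z)) + k(k-1), where ℓ denotes the number of inversions (Coxeter length) in S_{2n}. -/

import Mathlib

namespace GelfandRSK

/-- Schensted insertion of `x` into a single row: replace the first entry greater than `x`,
returning the new row and the bumped entry (if any). -/
def insertRow (r : List ℕ) (x : ℕ) : List ℕ × Option ℕ :=
  match r.findIdx? (fun y => decide (x < y)) with
  | none => (r ++ [x], none)
  | some i => (r.set i x, r[i]?)

/-- Schensted row insertion of `x` into a tableau (list of rows). -/
def rsInsert : List (List ℕ) → ℕ → List (List ℕ)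
  | [], x => [[x]]
  | r :: rest, x =>
    match insertRow r x with
    | (r', none) => r' :: rest
    | (r', some y) => r' :: rsInsert rest y

/-- The (0-indexed) row in which Schensted insertion of `x` adds a new box. -/
def rsBumpRow : List (List ℕ) → ℕ → ℕ
  | [], _ => 0
  | r :: rest, x =>
    match insertRow r x with
    | (_, none) => 0
    | (_, some y) => rsBumpRow rest y + 1

/-- The (0-indexed) column in which Schensted insertion of `x` adds a new box. -/
def rsBumpCol (T : List (List ℕ)) (x : ℕ) : ℕ := (T.getD (rsBumpRow T x) []).length

/-- Add entry `k` at the end of (0-indexed) row `r`. -/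
def addAtRow (T : List (List ℕ)) (r : ℕ) (k : ℕ) : List (List ℕ) :=
  if r < T.length then T.set r (T.getD r [] ++ [k]) else T ++ [[k]]

/-- Add entry `k` at the end of (0-indexed) column `c`. -/
def addAtCol (T : List (List ℕ)) (c : ℕ) (k : ℕ) : List (List ℕ) :=
  addAtRow T (T.findIdx (fun r => decide (r.length ≤ c))) k

/-- The Robinson--Schensted insertion tableau of a word. -/
def PRS (w : List ℕ) : List (List ℕ) := w.foldl rsInsert []

/-- The Robinson--Schensted pair (insertion tableau, recording tableau) of a word. -/
def RSpair (w : List ℕ) : List (List ℕ) × List (List ℕ) :=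
  ((List.range w.length).zip w).foldl (fun pq ix =>
    (rsInsert pq.1 ix.2, addAtRow pq.2 (rsBumpRow pq.1 ix.2) (ix.1 + 1))) ([], [])

/-- The Robinson--Schensted recording tableau of a word. -/
def QRS (w : List ℕ) : List (List ℕ) := (RSpair w).2

/-- The row reading word: read rows left to right, starting with the last row. -/
def rowWord (T : List (List ℕ)) : List ℕ := T.reverse.flatten

/-- The shape of a tableau: the list of its row lengths. -/
def shape (T : List (List ℕ)) : List ℕ := T.map List.length

/-- Columns of the tableau are strictly increasing downwards. -/
def colStrict (T : List (List ℕ)) : Prop :=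
  ∀ i c, i + 1 < T.length → c < (T.getD (i+1) []).length →
    (T.getD i []).getD c 0 < (T.getD (i+1) []).getD c 0

/-- A partially standard tableau: semistandard, of partition shape, with
distinct positive entries (hence rows and columns strictly increasing). -/
def PartiallyStandard (T : List (List ℕ)) : Prop :=
  (∀ r ∈ T, r ≠ []) ∧
  T.Chain' (fun r₁ r₂ => r₂.length ≤ r₁.length) ∧
  (∀ r ∈ T, r.Chain' (· < ·)) ∧
  colStrict T ∧
  T.flatten.Nodup ∧
  (∀ x ∈ T.flatten, 0 < x)

/-- A standard tableau with `n` boxes: partially standard with entries exactly `1, …, n`. -/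
def IsStandardTab (n : ℕ) (T : List (List ℕ)) : Prop :=
  PartiallyStandard T ∧ T.flatten.Perm (List.range' 1 n)

/-- Row Beissinger insertion of a pair `(a, b)` with `a ≤ b`. -/
def rBS (T : List (List ℕ)) (a b : ℕ) : List (List ℕ) :=
  if a = b then addAtRow T 0 a
  else addAtRow (rsInsert T a) (rsBumpRow T a + 1) b

/-- Column Beissinger insertion of a pair `(a, b)` with `a ≤ b`. -/
def cBS (T : List (List ℕ)) (a b : ℕ) : List (List ℕ) :=
  if a = b then addAtCol T 0 a
  else addAtCol (rsInsert T a) (rsBumpCol T a + 1) b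

/-- The function on 0-based indices underlying a permutation of `Fin n`
(identity outside `[0, n)`). -/
def permFn {n : ℕ} (z : Equiv.Perm (Fin n)) : ℕ → ℕ :=
  fun i => if h : i < n then (z ⟨i, h⟩ : ℕ) else i

/-- The one-line word (with 1-based values) of a function on `[0, m)`. -/
def wordFn (w : ℕ → ℕ) (m : ℕ) : List ℕ := (List.range m).map (fun i => w i + 1)

/-- The one-line word (with 1-based values) of a permutation in `S_n`. -/
def wordOf {n : ℕ} (z : Equiv.Perm (Fin n)) : List ℕ := wordFn (permFn z) n

/-- The 1-based action of a permutation: `act y j = y(j)` in 1-based notation. -/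
def act {n : ℕ} (y : Equiv.Perm (Fin n)) (j : ℕ) : ℕ := permFn y (j - 1) + 1

/-- The 1-based pairs `(a, b)` with `a ≤ b = z(a)` of an involution,
listed in increasing order of `b`. -/
def invPairsFn (w : ℕ → ℕ) (m : ℕ) : List (ℕ × ℕ) :=
  ((List.range m).filter (fun b => decide (w b ≤ b))).map (fun b => (w b + 1, b + 1))

/-- Row Beissinger correspondence applied to an involution given as a function on `[0, m)`. -/
def PrBSfn (w : ℕ → ℕ) (m : ℕ) : List (List ℕ) :=
  (invPairsFn w m).foldl (fun T p => rBS T p.1 p.2) []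

/-- Column Beissinger correspondence applied to an involution given as a function on `[0, m)`. -/
def PcBSfn (w : ℕ → ℕ) (m : ℕ) : List (List ℕ) :=
  (invPairsFn w m).foldl (fun T p => cBS T p.1 p.2) []

/-- The row Beissinger tableau of an involution in `S_n`. -/
def PrBS {n : ℕ} (z : Equiv.Perm (Fin n)) : List (List ℕ) := PrBSfn (permFn z) n

/-- The column Beissinger tableau of an involution in `S_n`. -/
def PcBS {n : ℕ} (z : Equiv.Perm (Fin n)) : List (List ℕ) := PcBSfn (permFn z) n

/-- The transpose of a tableau. -/
def transposeT (T : List (List ℕ)) : List (List ℕ) :=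
  (List.range (T.headD []).length).map (fun c => T.filterMap (fun r => r[c]?))

/-- The length of (0-indexed) column `c`. -/
def colLen (T : List (List ℕ)) (c : ℕ) : ℕ := (T.filter (fun r => decide (c < r.length))).length

/-- The number of columns of odd length. -/
def oddColCount (T : List (List ℕ)) : ℕ :=
  ((List.range (T.headD []).length).filter (fun c => decide (colLen T c % 2 = 1))).length

/-- The number of rows of odd length. -/
def oddRowCount (T : List (List ℕ)) : ℕ :=
  (T.filter (fun r => decide (r.length % 2 = 1))).length

/-- Apply a function to every entry of a tableau. -/
def applyEntries (f : ℕ → ℕ) (T : List (List ℕ)) : List (List ℕ) := T.map (List.map f)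

/-- The transposition of values `j` and `j+1`. -/
def swapVals (j : ℕ) : ℕ → ℕ := fun x => if x = j then j + 1 else if x = j + 1 then j else x

/-- The elementary dual equivalence operator `D_i` acting on a tableau
containing the entries `i-1`, `i`, `i+1`, defined via the row reading word. -/
def Dop (i : ℕ) (T : List (List ℕ)) : List (List ℕ) :=
  let w := rowWord T
  let p : ℕ → ℕ := fun v => w.idxOf v
  if (p i < p (i+1) ∧ p (i+1) < p (i-1)) ∨ (p (i-1) < p (i+1) ∧ p (i+1) < p i) then
    applyEntries (swapVals (i-1)) T
  else if (p i < p (i-1) ∧ p (i-1) < p (i+1)) ∨ (p (i+1) < p (i-1) ∧ p (i-1) < p i) then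
    applyEntries (swapVals i) T
  else T

/-- `x` lies strictly between `u` and `v`. -/
def Btwn {α : Type*} [LT α] (x u v : α) : Prop := (u < x ∧ x < v) ∨ (v < x ∧ x < u)

/-- Exchange the entries at 0-based positions `p` and `q` of a word. -/
def swapPos (u : List ℕ) (p q : ℕ) : List ℕ := (u.set p (u.getD q 0)).set q (u.getD p 0)

/-- The Knuth move relation at 1-based position `i` on words: either the word is
unchanged and the letters at positions `i-1, i, i+1` are monotone, or the letters at
positions `i-1, i` are exchanged (when the letter at position `i+1` is between them),
or the letters at positions `i, i+1` are exchanged (when the letter at position `i-1`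
is between them). -/
def KnuthRelW (i : ℕ) (u v : List ℕ) : Prop :=
  (v = u ∧ ((u.getD (i-2) 0 < u.getD (i-1) 0 ∧ u.getD (i-1) 0 < u.getD i 0) ∨
            (u.getD i 0 < u.getD (i-1) 0 ∧ u.getD (i-1) 0 < u.getD (i-2) 0))) ∨
  (Btwn (u.getD i 0) (u.getD (i-2) 0) (u.getD (i-1) 0) ∧ v = swapPos u (i-2) (i-1)) ∨
  (Btwn (u.getD (i-2) 0) (u.getD (i-1) 0) (u.getD i 0) ∧ v = swapPos u (i-1) i)

/-- The Knuth move relation at position `i` on permutations. -/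
def KnuthRel {n : ℕ} (i : ℕ) (v w : Equiv.Perm (Fin n)) : Prop :=
  KnuthRelW i (wordOf v) (wordOf w)

/-- The dual Knuth move relation at position `i` on permutations. -/
def DualKnuthRel {n : ℕ} (i : ℕ) (v w : Equiv.Perm (Fin n)) : Prop :=
  KnuthRelW i (wordOf v⁻¹) (wordOf w⁻¹)

/-- Knuth equivalence of permutations. -/
def KnuthEquiv {n : ℕ} (v w : Equiv.Perm (Fin n)) : Prop :=
  Relation.ReflTransGen (fun a b => ∃ i, 1 < i ∧ i < n ∧ KnuthRel i a b) v w

/-- Dual Knuth equivalence of permutations. -/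
def DualKnuthEquiv {n : ℕ} (v w : Equiv.Perm (Fin n)) : Prop :=
  Relation.ReflTransGen (fun a b => ∃ i, 1 < i ∧ i < n ∧ DualKnuthRel i a b) v w

/-- The 0-based fixed points of a permutation, in increasing order. -/
def fixList {n : ℕ} (z : Equiv.Perm (Fin n)) : List ℕ :=
  ((List.finRange n).filter (fun c => decide (z c = c))).map Fin.val

/-- The ascending embedding `ι_asc` of involutions of `[n]` into fixed-point-free
involutions of `[2n]`, as a function on 0-based indices. -/
def iotaAsc {n : ℕ} (z : Equiv.Perm (Fin n)) : ℕ → ℕ := fun i =>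
  let F := fixList z
  if h : i < n then
    if z ⟨i, h⟩ = ⟨i, h⟩ then n + F.idxOf i else (z ⟨i, h⟩ : ℕ)
  else if i < n + F.length then F.getD (i - n) 0
  else if i % 2 = 0 then i + 1 else i - 1

/-- The descending embedding `ι_des` of involutions of `[n]` into fixed-point-free
involutions of `[2n]`, as a function on 0-based indices. -/
def iotaDes {n : ℕ} (z : Equiv.Perm (Fin n)) : ℕ → ℕ := fun i =>
  let F := fixList z
  if h : i < n then
    if z ⟨i, h⟩ = ⟨i, h⟩ then n + F.length - 1 - F.idxOf i else (z ⟨i, h⟩ : ℕ)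
  else if i < n + F.length then F.getD (n + F.length - 1 - i) 0
  else if i % 2 = 0 then i + 1 else i - 1

/-- The number of inversions of a function on `[0, m)`. -/
def lenFn (w : ℕ → ℕ) (m : ℕ) : ℕ :=
  ((Finset.range m ×ˢ Finset.range m).filter (fun p => p.1 < p.2 ∧ w p.2 < w p.1)).card

/-- Weak descents (0-based indices `i` with `0 ≤ i < n-1`). -/
def wDesEq (w : ℕ → ℕ) (n : ℕ) : Finset ℕ :=
  (Finset.range (n-1)).filter (fun i => w i = i + 1 ∧ w (i+1) = i)

/-- Weak ascents. -/
def wAscEq (w : ℕ → ℕ) (n : ℕ) : Finset ℕ :=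
  (Finset.range (n-1)).filter (fun i => n ≤ w i ∧ n ≤ w (i+1))

/-- Strict descents. -/
def wDesLt (w : ℕ → ℕ) (n : ℕ) : Finset ℕ :=
  ((Finset.range (n-1)).filter (fun i => w (i+1) < w i)) \ (wAscEq w n ∪ wDesEq w n)

/-- Strict ascents. -/
def wAscLt (w : ℕ → ℕ) (n : ℕ) : Finset ℕ :=
  ((Finset.range (n-1)).filter (fun i => w i < w (i+1))) \ wAscEq w n

/-- Delete all boxes of `T` whose entry exceeds `n`. -/
def restrictT (T : List (List ℕ)) (n : ℕ) : List (List ℕ) :=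
  (T.map (fun r => r.filter (fun x => decide (x ≤ n)))).filter (fun r => !r.isEmpty)

/-- The 0-based indices of the odd columns of `T`, in increasing order. -/
def oddColsList (T : List (List ℕ)) : List ℕ :=
  (List.range (T.headD []).length).filter (fun c => decide (colLen T c % 2 = 1))

/-- Given a standard tableau `T` with `n` boxes and `k` odd columns, place
`n+1, …, n+k` at the bottoms of the odd columns from left to right, then add
`n+k+1, n+k+3, …, 2n-1` to the first row and `n+k+2, n+k+4, …, 2n` to the second row. -/
def iotaRow (n : ℕ) (T : List (List ℕ)) : List (List ℕ) :=
  let cols := oddColsList T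
  let k := cols.length
  let T1 := ((List.range cols.length).zip cols).foldl (fun S ci => addAtCol S ci.2 (n + 1 + ci.1)) T
  let T2 := (List.range ((n - k) / 2)).foldl (fun S m => addAtRow S 0 (n + k + 1 + 2*m)) T1
  (List.range ((n - k) / 2)).foldl (fun S m => addAtRow S 1 (n + k + 2 + 2*m)) T2

/-- The number of transfer points: 0-based `i < n` with `w i ≥ n` (1-based `w(i) > n`). -/
def transferCount (w : ℕ → ℕ) (n : ℕ) : ℕ :=
  ((List.range n).filter (fun i => decide (n ≤ w i))).length

/-- `G^asc_n`: the image of the ascending embedding. -/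
def GAsc (n : ℕ) : Set (ℕ → ℕ) := {f | ∃ w : Equiv.Perm (Fin n), w * w = 1 ∧ f = iotaAsc w}

/-- `G^des_n`: the image of the descending embedding. -/
def GDes (n : ℕ) : Set (ℕ → ℕ) := {f | ∃ w : Equiv.Perm (Fin n), w * w = 1 ∧ f = iotaDes w}

/-- The value `e(j)` from the statement of Theorem on column Beissinger dual
equivalence: for 1-based `j`, `e(j) = -j` if `y(j) = j`; `e(j) = j` if
`j ≠ y(j) ∈ {i-1, i, i+1}`; and `e(j) = y(j)` otherwise. -/
def eVal {n : ℕ} (y : Equiv.Perm (Fin n)) (i j : ℕ) : ℤ :=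
  if act y j = j then -(j : ℤ)
  else if act y j ∈ ({i-1, i, i+1} : Finset ℕ) then (j : ℤ)
  else (act y j : ℤ)

/-- Schensted column insertion, via the transpose. -/
def colInsertT (T : List (List ℕ)) (x : ℕ) : List (List ℕ) :=
  transposeT (rsInsert (transposeT T) x)

/-- The (0-indexed) row in which Schensted column insertion of `x` adds a box. -/
def colBumpRow (T : List (List ℕ)) (x : ℕ) : ℕ := rsBumpCol (transposeT T) x

/-- The alternative column Beissinger insertion `T ⇐cBS (a,b)`: if `a = b`, add `a`
at the end of the first row; if `a < b`, column insert `a` (adding a box in row `i`)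
and add `b` at the end of row `i+1`. -/
def cBSalt (T : List (List ℕ)) (a b : ℕ) : List (List ℕ) :=
  if a = b then addAtRow T 0 a
  else addAtRow (colInsertT T a) (colBumpRow T a + 1) b

section Aux14

variable {n : ℕ} (z : Equiv.Perm (Fin n))

private lemma fixList_eq_filter :
    fixList z = (List.range n).filter (fun c => decide (permFn z c = c)) := by
  unfold fixList
  rw [← (List.ext_getElem (by simp) (by simp) : (List.finRange n).map Fin.val = List.range n), List.filter_map]
  congr 1
  apply List.filter_congr
  intro a _
  simp [permFn, Fin.ext_iff]

private lemma permFn_fix_iff {x : ℕ} (h1 : x < n) :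
    permFn z x = x ↔ z ⟨x, h1⟩ = ⟨x, h1⟩ := by
  simp [permFn, h1, Fin.ext_iff]

private lemma mem_fixList {c : ℕ} : c ∈ fixList z ↔ c < n ∧ permFn z c = c := by
  rw [fixList_eq_filter]
  simp

private lemma fixList_pairwise : (fixList z).Pairwise (· < ·) := by
  rw [fixList_eq_filter]
  exact (List.pairwise_lt_range (n := n)).filter _

private lemma fixList_nodup : (fixList z).Nodup :=
  (fixList_pairwise z).imp ne_of_lt

private lemma fixList_length_le : (fixList z).length ≤ n := by
  rw [fixList_eq_filter]
  exact (List.length_filter_le _ _).trans (by simp)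

private lemma fixList_getD_mono {a b : ℕ} (hab : a < b) (hb : b < (fixList z).length) :
    (fixList z).getD a 0 < (fixList z).getD b 0 := by
  rw [List.getD_eq_getElem _ _ (lt_trans hab hb), List.getD_eq_getElem _ _ hb]
  exact List.pairwise_iff_getElem.mp (fixList_pairwise z) a b _ _ hab

private lemma fixList_getD_mem {m : ℕ} (h : m < (fixList z).length) :
    (fixList z).getD m 0 ∈ fixList z := by
  rw [List.getD_eq_getElem _ _ h]
  exact List.getElem_mem h

private lemma fixList_getD_lt {m : ℕ} (h : m < (fixList z).length) :
    (fixList z).getD m 0 < n :=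
  ((mem_fixList z).mp (fixList_getD_mem z h)).1

private lemma fixList_getD_indexOf {c : ℕ} (hc : c ∈ fixList z) :
    (fixList z).getD ((fixList z).idxOf c) 0 = c := by
  rw [List.getD_eq_getElem _ _ (List.idxOf_lt_length_iff.mpr hc)]
  exact List.getElem_idxOf _

private lemma fixList_indexOf_getD {m : ℕ} (h : m < (fixList z).length) :
    (fixList z).idxOf ((fixList z).getD m 0) = m := by
  rw [List.getD_eq_getElem _ _ h]
  exact List.Nodup.idxOf_getElem (fixList_nodup z) m h

private lemma fixList_indexOf_mono {c c' : ℕ} (hc : c ∈ fixList z) (hc' : c' ∈ fixList z)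
    (h : c < c') : (fixList z).idxOf c < (fixList z).idxOf c' := by
  by_contra hcon
  push_neg at hcon
  rcases lt_or_eq_of_le hcon with hlt | heq
  · have := fixList_getD_mono z hlt (List.idxOf_lt_length_iff.mpr hc)
    rw [fixList_getD_indexOf z hc, fixList_getD_indexOf z hc'] at this
    omega
  · have : c' = c := by
      rw [← fixList_getD_indexOf z hc', heq, fixList_getD_indexOf z hc]
    omega

/-- The reversal of the block `[n, n+k)`. -/
private def rmap (n k i : ℕ) : ℕ := if n ≤ i ∧ i < n + k then 2*n + k - 1 - i else i

private lemma rmap_invol (n k i : ℕ) : rmap n k (rmap n k i) = i := by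
  simp only [rmap]
  split_ifs <;> omega

private lemma rmap_low {n k x : ℕ} (h : x < n) : rmap n k x = x := by
  simp only [rmap]
  rw [if_neg (by omega)]

private lemma rmap_ge {n k x : ℕ} (h : n ≤ x) : n ≤ rmap n k x := by
  simp only [rmap]
  split_ifs <;> omega

private lemma rmap_lt {n k x : ℕ} (hk : k ≤ n) (hx : x < 2*n) : rmap n k x < 2*n := by
  simp only [rmap]
  split_ifs <;> omega

private lemma rmap_isB {n k x : ℕ} :
    (n ≤ rmap n k x ∧ rmap n k x < n + k) ↔ (n ≤ x ∧ x < n + k) := by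
  simp only [rmap]
  split_ifs <;> omega

private lemma rmap_order {n k : ℕ} {i j : ℕ} (hij : i < j)
    (hB : ¬((n ≤ i ∧ i < n + k) ∧ (n ≤ j ∧ j < n + k))) : rmap n k i < rmap n k j := by
  simp only [rmap]
  split_ifs <;> omega

private lemma iotaAsc_A {x : ℕ} (h1 : x < n) (h2 : z ⟨x, h1⟩ = ⟨x, h1⟩) :
    iotaAsc z x = n + (fixList z).idxOf x := by
  simp only [iotaAsc]
  rw [dif_pos h1, if_pos h2]

private lemma iotaDes_A {x : ℕ} (h1 : x < n) (h2 : z ⟨x, h1⟩ = ⟨x, h1⟩) :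
    iotaDes z x = n + (fixList z).length - 1 - (fixList z).idxOf x := by
  simp only [iotaDes]
  rw [dif_pos h1, if_pos h2]

private lemma iotaAsc_low {x : ℕ} (h1 : x < n) (h2 : z ⟨x, h1⟩ ≠ ⟨x, h1⟩) :
    iotaAsc z x = (z ⟨x, h1⟩ : ℕ) := by
  simp only [iotaAsc]
  rw [dif_pos h1, if_neg h2]

private lemma iotaDes_low {x : ℕ} (h1 : x < n) (h2 : z ⟨x, h1⟩ ≠ ⟨x, h1⟩) :
    iotaDes z x = (z ⟨x, h1⟩ : ℕ) := by
  simp only [iotaDes]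
  rw [dif_pos h1, if_neg h2]

private lemma iotaAsc_B {y : ℕ} (h1 : n ≤ y) (h2 : y < n + (fixList z).length) :
    iotaAsc z y = (fixList z).getD (y - n) 0 := by
  simp only [iotaAsc]
  rw [dif_neg (by omega), if_pos h2]

private lemma iotaDes_B {y : ℕ} (h1 : n ≤ y) (h2 : y < n + (fixList z).length) :
    iotaDes z y = (fixList z).getD (n + (fixList z).length - 1 - y) 0 := by
  simp only [iotaDes]
  rw [dif_neg (by omega), if_pos h2]

private lemma iotaAsc_high {y : ℕ} (h1 : n + (fixList z).length ≤ y) :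
    iotaAsc z y = if y % 2 = 0 then y + 1 else y - 1 := by
  simp only [iotaAsc]
  rw [dif_neg (by omega), if_neg (by omega)]

private lemma iotaDes_high {y : ℕ} (h1 : n + (fixList z).length ≤ y) :
    iotaDes z y = if y % 2 = 0 then y + 1 else y - 1 := by
  simp only [iotaDes]
  rw [dif_neg (by omega), if_neg (by omega)]

private lemma A_val {x : ℕ} (h1 : x < n) (h2 : permFn z x = x) :
    rmap n (fixList z).length x = x ∧
    n ≤ iotaDes z x ∧ iotaDes z x ≤ n + (fixList z).length - 1 ∧
    n ≤ iotaAsc z x ∧ iotaAsc z x ≤ n + (fixList z).length - 1 := by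
  have hz' : z ⟨x, h1⟩ = ⟨x, h1⟩ := (permFn_fix_iff z h1).mp h2
  have hmem : x ∈ fixList z := (mem_fixList z).mpr ⟨h1, h2⟩
  have hidx : (fixList z).idxOf x < (fixList z).length := List.idxOf_lt_length_iff.mpr hmem
  rw [iotaDes_A z h1 hz', iotaAsc_A z h1 hz', rmap_low h1]
  omega

private lemma low_val {x : ℕ} (h1 : x < n) (h2 : permFn z x ≠ x) :
    iotaDes z x = iotaAsc z (rmap n (fixList z).length x) ∧ iotaDes z x < n := by
  have hz' : z ⟨x, h1⟩ ≠ ⟨x, h1⟩ := fun h => h2 ((permFn_fix_iff z h1).mpr h)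
  rw [rmap_low h1, iotaDes_low z h1 hz', iotaAsc_low z h1 hz']
  exact ⟨rfl, (z ⟨x, h1⟩).isLt⟩

private lemma notA_val {x : ℕ} (hx : x < 2*n) (hA : ¬(x < n ∧ permFn z x = x)) :
    iotaDes z x = iotaAsc z (rmap n (fixList z).length x) ∧
    (iotaDes z x < n ∨ n + (fixList z).length - 1 ≤ iotaDes z x) := by
  by_cases h1 : x < n
  · have h2 : permFn z x ≠ x := fun h => hA ⟨h1, h⟩
    obtain ⟨e, hb⟩ := low_val z h1 h2
    exact ⟨e, Or.inl hb⟩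
  · by_cases h2 : x < n + (fixList z).length
    · have hn : n ≤ x := le_of_not_gt h1
      have hr : rmap n (fixList z).length x = 2*n + (fixList z).length - 1 - x :=
        if_pos ⟨hn, h2⟩
      have hidx : n + (fixList z).length - 1 - x < (fixList z).length := by omega
      constructor
      · rw [iotaDes_B z hn h2, hr, iotaAsc_B z (by omega) (by omega)]
        congr 1
        omega
      · left
        rw [iotaDes_B z hn h2]
        exact fixList_getD_lt z hidx
    · have hn : n + (fixList z).length ≤ x := le_of_not_gt h2
      have hr : rmap n (fixList z).length x = x := by
        simp only [rmap]
        rw [if_neg (by omega)]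
      rw [hr, iotaDes_high z hn, iotaAsc_high z hn]
      refine ⟨rfl, Or.inr ?_⟩
      split_ifs <;> omega

private lemma asc_mono_A {i j : ℕ} (h1 : i < n) (h2 : permFn z i = i)
    (h3 : j < n) (h4 : permFn z j = j) (hij : i < j) : iotaAsc z i < iotaAsc z j := by
  rw [iotaAsc_A z h1 ((permFn_fix_iff z h1).mp h2), iotaAsc_A z h3 ((permFn_fix_iff z h3).mp h4)]
  have := fixList_indexOf_mono z ((mem_fixList z).mpr ⟨h1, h2⟩) ((mem_fixList z).mpr ⟨h3, h4⟩) hij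
  omega

private lemma des_anti_A {i j : ℕ} (h1 : i < n) (h2 : permFn z i = i)
    (h3 : j < n) (h4 : permFn z j = j) (hij : i < j) : iotaDes z j < iotaDes z i := by
  rw [iotaDes_A z h1 ((permFn_fix_iff z h1).mp h2), iotaDes_A z h3 ((permFn_fix_iff z h3).mp h4)]
  have hm := fixList_indexOf_mono z ((mem_fixList z).mpr ⟨h1, h2⟩) ((mem_fixList z).mpr ⟨h3, h4⟩) hij
  have hi : (fixList z).idxOf j < (fixList z).length :=
    List.idxOf_lt_length_iff.mpr ((mem_fixList z).mpr ⟨h3, h4⟩)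
  omega

private lemma asc_mono_B {i j : ℕ} (h1 : n ≤ i) (hij : i < j)
    (h2 : j < n + (fixList z).length) : iotaAsc z i < iotaAsc z j := by
  rw [iotaAsc_B z h1 (by omega), iotaAsc_B z (by omega) h2]
  exact fixList_getD_mono z (by omega) (by omega)

private lemma des_anti_B {i j : ℕ} (h1 : n ≤ i) (hij : i < j)
    (h2 : j < n + (fixList z).length) : iotaDes z j < iotaDes z i := by
  rw [iotaDes_B z h1 (by omega), iotaDes_B z (by omega) h2]
  exact fixList_getD_mono z (by omega) (by omega)

private lemma cmp_lemma {i j : ℕ} (hij : i < j) (hj : j < 2*n)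
    (hA : ¬((i < n ∧ permFn z i = i) ∧ (j < n ∧ permFn z j = j)))
    (hB : ¬((n ≤ i ∧ i < n + (fixList z).length) ∧ (n ≤ j ∧ j < n + (fixList z).length))) :
    (iotaDes z j < iotaDes z i ↔
      iotaAsc z (rmap n (fixList z).length j) < iotaAsc z (rmap n (fixList z).length i)) := by
  have hi : i < 2*n := lt_trans hij hj
  by_cases Ai : i < n ∧ permFn z i = i
  · have hAj : ¬(j < n ∧ permFn z j = j) := fun h => hA ⟨Ai, h⟩
    obtain ⟨e1, l1, l2, l3, l4⟩ := A_val z Ai.1 Ai.2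
    obtain ⟨e2, hd⟩ := notA_val z hj hAj
    rw [e1, e2] at *
    rcases hd with hlow | hhigh
    · constructor <;> intro <;> omega
    · constructor <;> intro <;> omega
  · by_cases Aj : j < n ∧ permFn z j = j
    · have hi_n : i < n := lt_trans hij Aj.1
      have hnf : permFn z i ≠ i := fun h => Ai ⟨hi_n, h⟩
      obtain ⟨e1, l1, l2, l3, l4⟩ := A_val z Aj.1 Aj.2
      obtain ⟨e2, hlow⟩ := low_val z hi_n hnf
      rw [e1, e2] at *
      constructor <;> intro <;> omega
    · obtain ⟨e2, _⟩ := notA_val z hi Ai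
      obtain ⟨e3, _⟩ := notA_val z hj Aj
      rw [e2, e3]

end Aux14

/-- `ℓ(ι_des(z)) = ℓ(ι_asc(z)) + k(k-1)` for an involution `z`
with `k` fixed points. -/
theorem iotaDes_length (n k : ℕ) (z : Equiv.Perm (Fin n)) (hz : z * z = 1)
    (hk : (fixList z).length = k) :
    lenFn (iotaDes z) (2 * n) = lenFn (iotaAsc z) (2 * n) + k * (k - 1) := by
  classical
  subst hk
  set k := (fixList z).length with hkdef
  have hkn : k ≤ n := fixList_length_le z
  set P := Finset.range (2*n) ×ˢ Finset.range (2*n) with hP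
  set Dinv := P.filter (fun p => p.1 < p.2 ∧ iotaDes z p.2 < iotaDes z p.1) with hD
  set Ainv := P.filter (fun p => p.1 < p.2 ∧ iotaAsc z p.2 < iotaAsc z p.1) with hAi
  set U := P.filter (fun p => p.1 < p.2 ∧
      (((p.1 < n ∧ permFn z p.1 = p.1) ∧ (p.2 < n ∧ permFn z p.2 = p.2)) ∨
       ((n ≤ p.1 ∧ p.1 < n + k) ∧ (n ≤ p.2 ∧ p.2 < n + k)))) with hU
  have memD : ∀ p : ℕ × ℕ, p ∈ Dinv ↔
      p.1 < 2*n ∧ p.2 < 2*n ∧ p.1 < p.2 ∧ iotaDes z p.2 < iotaDes z p.1 := by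
    intro p
    simp only [hD, hP, Finset.mem_filter, Finset.mem_product, Finset.mem_range]
    tauto
  have memA : ∀ p : ℕ × ℕ, p ∈ Ainv ↔
      p.1 < 2*n ∧ p.2 < 2*n ∧ p.1 < p.2 ∧ iotaAsc z p.2 < iotaAsc z p.1 := by
    intro p
    simp only [hAi, hP, Finset.mem_filter, Finset.mem_product, Finset.mem_range]
    tauto
  have memU : ∀ p : ℕ × ℕ, p ∈ U ↔
      p.1 < 2*n ∧ p.2 < 2*n ∧ p.1 < p.2 ∧
      (((p.1 < n ∧ permFn z p.1 = p.1) ∧ (p.2 < n ∧ permFn z p.2 = p.2)) ∨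
       ((n ≤ p.1 ∧ p.1 < n + k) ∧ (n ≤ p.2 ∧ p.2 < n + k))) := by
    intro p
    simp only [hU, hP, Finset.mem_filter, Finset.mem_product, Finset.mem_range]
    tauto
  have hUsub : U ⊆ Dinv := by
    intro p hp
    rw [memU] at hp
    rw [memD]
    obtain ⟨h1, h2, h3, hcase⟩ := hp
    refine ⟨h1, h2, h3, ?_⟩
    rcases hcase with ⟨⟨a1, a2⟩, ⟨a3, a4⟩⟩ | ⟨⟨b1, b2⟩, ⟨b3, b4⟩⟩
    · exact des_anti_A z a1 a2 a3 a4 h3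
    · exact des_anti_B z b1 h3 b4
  have hcard1 : (Dinv \ U).card + U.card = Dinv.card :=
    Finset.card_sdiff_add_card_eq_card hUsub
  -- bijection between Dinv \ U and Ainv
  have hcard2 : (Dinv \ U).card = Ainv.card := by
    apply Finset.card_bij' (fun p _ => (rmap n k p.1, rmap n k p.2))
      (fun p _ => (rmap n k p.1, rmap n k p.2))
    · intro p hp
      rw [Finset.mem_sdiff, memD, memU] at hp
      obtain ⟨⟨h1, h2, h3, h4⟩, hpU⟩ := hp
      have hnAB : ¬(((p.1 < n ∧ permFn z p.1 = p.1) ∧ (p.2 < n ∧ permFn z p.2 = p.2)) ∨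
          ((n ≤ p.1 ∧ p.1 < n + k) ∧ (n ≤ p.2 ∧ p.2 < n + k))) :=
        fun hc => hpU ⟨h1, h2, h3, hc⟩
      have hnA1 : ¬((p.1 < n ∧ permFn z p.1 = p.1) ∧ (p.2 < n ∧ permFn z p.2 = p.2)) :=
        fun hc => hnAB (Or.inl hc)
      have hnB1 : ¬((n ≤ p.1 ∧ p.1 < n + k) ∧ (n ≤ p.2 ∧ p.2 < n + k)) :=
        fun hc => hnAB (Or.inr hc)
      rw [memA]
      refine ⟨rmap_lt hkn h1, rmap_lt hkn h2, rmap_order h3 hnB1, ?_⟩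
      exact (cmp_lemma z h3 h2 hnA1 hnB1).mp h4
    · intro q hq
      rw [memA] at hq
      obtain ⟨h1, h2, h3, h4⟩ := hq
      have hnA : ¬((q.1 < n ∧ permFn z q.1 = q.1) ∧ (q.2 < n ∧ permFn z q.2 = q.2)) := by
        rintro ⟨⟨a1, a2⟩, ⟨a3, a4⟩⟩
        exact absurd h4 (not_lt.mpr (le_of_lt (asc_mono_A z a1 a2 a3 a4 h3)))
      have hnB : ¬((n ≤ q.1 ∧ q.1 < n + k) ∧ (n ≤ q.2 ∧ q.2 < n + k)) := by
        rintro ⟨⟨b1, b2⟩, ⟨b3, b4⟩⟩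
        exact absurd h4 (not_lt.mpr (le_of_lt (asc_mono_B z b1 h3 b4)))
      have hr3 : rmap n k q.1 < rmap n k q.2 := rmap_order h3 hnB
      have hr1 : rmap n k q.1 < 2*n := rmap_lt hkn h1
      have hr2 : rmap n k q.2 < 2*n := rmap_lt hkn h2
      have hA' : ¬((rmap n k q.1 < n ∧ permFn z (rmap n k q.1) = rmap n k q.1) ∧
          (rmap n k q.2 < n ∧ permFn z (rmap n k q.2) = rmap n k q.2)) := by
        rintro ⟨⟨a1, a2⟩, ⟨a3, a4⟩⟩
        have hq1 : q.1 < n := by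
          by_contra hc
          exact absurd (rmap_ge (le_of_not_gt hc)) (not_le.mpr a1)
        have hq2 : q.2 < n := by
          by_contra hc
          exact absurd (rmap_ge (le_of_not_gt hc)) (not_le.mpr a3)
        rw [rmap_low hq1] at a2
        rw [rmap_low hq2] at a4
        exact hnA ⟨⟨hq1, a2⟩, ⟨hq2, a4⟩⟩
      have hB' : ¬((n ≤ rmap n k q.1 ∧ rmap n k q.1 < n + k) ∧
          (n ≤ rmap n k q.2 ∧ rmap n k q.2 < n + k)) := by
        rintro ⟨hb1, hb2⟩
        exact hnB ⟨rmap_isB.mp hb1, rmap_isB.mp hb2⟩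
      rw [Finset.mem_sdiff, memD, memU]
      constructor
      · refine ⟨hr1, hr2, hr3, ?_⟩
        have := (cmp_lemma z hr3 hr2 hA' hB').mpr
        rw [rmap_invol, rmap_invol] at this
        exact this h4
      · rintro ⟨_, _, _, hc⟩
        exact hc.elim hA' hB'
    · intro p _
      simp [rmap_invol]
    · intro p _
      simp [rmap_invol]
  -- the card of U
  have hcard3 : U.card = ((Finset.range k).offDiag).card := by
    apply Finset.card_bij'
      (fun p _ => if p.1 < n then ((fixList z).idxOf p.1, (fixList z).idxOf p.2)
                  else (p.2 - n, p.1 - n))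
      (fun q _ => if q.1 < q.2 then ((fixList z).getD q.1 0, (fixList z).getD q.2 0)
                  else (n + q.2, n + q.1))
    · intro p hp
      rw [memU] at hp
      obtain ⟨h1, h2, h3, hcase⟩ := hp
      rcases hcase with ⟨⟨a1, a2⟩, ⟨a3, a4⟩⟩ | ⟨⟨b1, b2⟩, ⟨b3, b4⟩⟩
      · rw [if_pos a1, Finset.mem_offDiag]
        have m1 : p.1 ∈ fixList z := (mem_fixList z).mpr ⟨a1, a2⟩
        have m2 : p.2 ∈ fixList z := (mem_fixList z).mpr ⟨a3, a4⟩
        have := fixList_indexOf_mono z m1 m2 h3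
        have i1 := List.idxOf_lt_length_iff.mpr m1
        have i2 := List.idxOf_lt_length_iff.mpr m2
        simp only [Finset.mem_range]
        exact ⟨i1, i2, by omega⟩
      · rw [if_neg (by omega), Finset.mem_offDiag]
        simp only [Finset.mem_range]
        exact ⟨by omega, by omega, by omega⟩
    · intro q hq
      rw [Finset.mem_offDiag] at hq
      simp only [Finset.mem_range] at hq
      obtain ⟨hq1, hq2, hq3⟩ := hq
      rw [memU]
      by_cases hlt : q.1 < q.2
      · rw [if_pos hlt]
        have g1 := fixList_getD_lt z hq1
        have g2 := fixList_getD_lt z hq2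
        have gm := fixList_getD_mono z hlt hq2
        have m1 := fixList_getD_mem z hq1
        have m2 := fixList_getD_mem z hq2
        refine ⟨by omega, by omega, gm, Or.inl ⟨?_, ?_⟩⟩
        · exact ⟨g1, ((mem_fixList z).mp m1).2⟩
        · exact ⟨g2, ((mem_fixList z).mp m2).2⟩
      · rw [if_neg hlt]
        have hgt : q.2 < q.1 := by omega
        refine ⟨by omega, by omega, by omega, Or.inr ⟨⟨by omega, by omega⟩, ⟨by omega, by omega⟩⟩⟩
    · intro p hp
      rw [memU] at hp
      obtain ⟨h1, h2, h3, hcase⟩ := hp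
      rcases hcase with ⟨⟨a1, a2⟩, ⟨a3, a4⟩⟩ | ⟨⟨b1, b2⟩, ⟨b3, b4⟩⟩
      · have m1 : p.1 ∈ fixList z := (mem_fixList z).mpr ⟨a1, a2⟩
        have m2 : p.2 ∈ fixList z := (mem_fixList z).mpr ⟨a3, a4⟩
        have hmono := fixList_indexOf_mono z m1 m2 h3
        rw [if_pos a1]
        dsimp only
        rw [if_pos hmono, fixList_getD_indexOf z m1, fixList_getD_indexOf z m2]
      · rw [if_neg (show ¬ p.1 < n by omega)]
        dsimp only
        rw [if_neg (show ¬ (p.2 - n < p.1 - n) by omega)]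
        rw [show n + (p.1 - n) = p.1 by omega, show n + (p.2 - n) = p.2 by omega]
    · intro q hq
      rw [Finset.mem_offDiag] at hq
      simp only [Finset.mem_range] at hq
      obtain ⟨hq1, hq2, hq3⟩ := hq
      by_cases hlt : q.1 < q.2
      · rw [if_pos hlt]
        dsimp only
        rw [if_pos (fixList_getD_lt z hq1), fixList_indexOf_getD z hq1,
          fixList_indexOf_getD z hq2]
      · rw [if_neg hlt]
        dsimp only
        rw [if_neg (show ¬ n + q.2 < n by omega)]
        rw [show n + q.1 - n = q.1 by omega, show n + q.2 - n = q.2 by omega]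
  have hoff : ((Finset.range k).offDiag).card = k * (k - 1) := by
    rw [Finset.offDiag_card, Finset.card_range, Nat.mul_sub_one]
  have hlenD : lenFn (iotaDes z) (2*n) = Dinv.card := rfl
  have hlenA : lenFn (iotaAsc z) (2*n) = Ainv.card := rfl
  rw [hlenD, hlenA]
  omega

end GelfandRSK
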